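/- Channel simulation for extremal qubit channels: let 0 ≤ b ≤ 1, 0 < c ≤ 1, 0 ≤ c' ≤ c, with bc ≠ 1 and bc' ≠ 1. Let N_{b,c} and N_{b,c'} be the extremal qubit channels with Kraus operators K₀(b,t) = [[√((1+b)(1+t)/(2(1+bt))), 0],[0, √((1−b)(1+t)/(2(1−bt)))]] and K₁(b,t) = [[0, √((1+b)(1−t)/(2(1−bt)))],[√((1−b)(1−t)/(2(1+bt))), 0]] for t = c and t = c', respectively. Then there exist 2×2 complex matrices M₀, M₁ with M₀†M₀ + M₁†M₁ = I such that N_{b,c'}(X) = Σ_{i,j ∈ {0,1}} K_i(b,c) M_j X M_j† K_i(b,c)† for every 2×2 complex matrix X; that is, N_{b,c'} = N_{b,c} ∘ M for a quantum channel M, so decreasing c makes the channel noisier. -/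
import Mathlib

open Matrix

/-- The two Kraus operators `K₀(b,t), K₁(b,t)` of the extremal qubit channel `N_{b,t}`. -/
noncomputable def extKraus (b t : ℝ) : Fin 2 → Matrix (Fin 2) (Fin 2) ℂ :=
  ![!![(Real.sqrt ((1 + b) * (1 + t) / (2 * (1 + b * t))) : ℂ), 0;
       0, (Real.sqrt ((1 - b) * (1 + t) / (2 * (1 - b * t))) : ℂ)],
    !![0, (Real.sqrt ((1 + b) * (1 - t) / (2 * (1 - b * t))) : ℂ);
       (Real.sqrt ((1 - b) * (1 - t) / (2 * (1 + b * t))) : ℂ), 0]]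

private lemma sqrt_helper {u v e w : ℝ} (hu : 0 ≤ u) (hv : 0 ≤ v) (he : 0 ≤ e)
    (huv : u * v = e ^ 2) (hw : u + v + 2 * e = w) :
    Real.sqrt u + Real.sqrt v = Real.sqrt w := by
  have hsn : 0 ≤ Real.sqrt u + Real.sqrt v := by positivity
  rw [← Real.sqrt_sq hsn]
  congr 1
  rw [add_sq, Real.sq_sqrt hu, Real.sq_sqrt hv, mul_assoc, ← Real.sqrt_mul hu, huv, Real.sqrt_sq he]
  linarith

set_option maxHeartbeats 2000000 in
/-- Channel simulation for extremal qubit channels: for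
`0 ≤ b ≤ 1`, `0 < c ≤ 1`, `0 ≤ c' ≤ c` with `bc ≠ 1` and `bc' ≠ 1`, there is a quantum
channel `M` (given by Kraus operators `M₀, M₁`) with `N_{b,c'} = N_{b,c} ∘ M`; that is,
decreasing `c` makes the channel noisier. -/
theorem stmt_11 (b c c' : ℝ) (hb0 : 0 ≤ b) (hb1 : b ≤ 1) (hc0 : 0 < c) (hc1 : c ≤ 1)
    (hc'0 : 0 ≤ c') (hc'c : c' ≤ c) (hbc : b * c ≠ 1) (hbc' : b * c' ≠ 1) :
    ∃ M₀ M₁ : Matrix (Fin 2) (Fin 2) ℂ,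
      M₀ᴴ * M₀ + M₁ᴴ * M₁ = 1 ∧
      ∀ X : Matrix (Fin 2) (Fin 2) ℂ,
        ∑ i, extKraus b c' i * X * (extKraus b c' i)ᴴ
          = ∑ i, ∑ j, extKraus b c i * (![M₀, M₁] j * X * (![M₀, M₁] j)ᴴ)
              * (extKraus b c i)ᴴ := by
  have hbcle : b * c < 1 := lt_of_le_of_ne (le_trans (mul_le_of_le_one_left hc0.le hb1) hc1) hbc
  have hbc'le : b * c' < 1 := lt_of_le_of_lt (mul_le_mul_of_nonneg_left hc'c hb0) hbcle
  have h1 : (0:ℝ) < 1 + b * c := by nlinarith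
  have h2 : (0:ℝ) < 1 - b * c := by linarith
  have h3 : (0:ℝ) < 1 + b * c' := by nlinarith
  have h4 : (0:ℝ) < 1 - b * c' := by linarith
  have hcne : c ≠ 0 := ne_of_gt hc0
  have h1ne : (1 : ℝ) + b * c ≠ 0 := ne_of_gt h1
  have h2ne : (1 : ℝ) - b * c ≠ 0 := ne_of_gt h2
  have h3ne : (1 : ℝ) + b * c' ≠ 0 := ne_of_gt h3
  have h4ne : (1 : ℝ) - b * c' ≠ 0 := ne_of_gt h4
  have e1b : (0:ℝ) ≤ 1 + b := by linarith
  have e2b : (0:ℝ) ≤ 1 - b := by linarith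
  have e1c : (0:ℝ) ≤ 1 + c := by linarith
  have e2c : (0:ℝ) ≤ 1 - c := by linarith
  have e1c' : (0:ℝ) ≤ 1 + c' := by linarith
  have e2c' : (0:ℝ) ≤ 1 - c' := by linarith
  have ecp : (0:ℝ) ≤ c + c' := by linarith
  have ecm : (0:ℝ) ≤ c - c' := by linarith
  have hb2 : (0:ℝ) ≤ 1 - b ^ 2 := by nlinarith
  have hcsq : (0:ℝ) ≤ 1 - c ^ 2 := by nlinarith
  have hcc2 : (0:ℝ) ≤ c ^ 2 - c' ^ 2 := by nlinarith
  have hd3 : (0:ℝ) < 2 * c * (1 + b * c') := by positivity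
  have hd4 : (0:ℝ) < 2 * c * (1 - b * c') := by positivity
  have hp2 : (0:ℝ) ≤ ((1 + b) * (1 + c) / (2 * (1 + b * c))) := div_nonneg (mul_nonneg e1b e1c) (by positivity : (0:ℝ) < 2 * (1 + b * c)).le
  have hq2 : (0:ℝ) ≤ ((1 - b) * (1 + c) / (2 * (1 - b * c))) := div_nonneg (mul_nonneg e2b e1c) (by positivity : (0:ℝ) < 2 * (1 - b * c)).le
  have hr2 : (0:ℝ) ≤ ((1 + b) * (1 - c) / (2 * (1 - b * c))) := div_nonneg (mul_nonneg e1b e2c) (by positivity : (0:ℝ) < 2 * (1 - b * c)).le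
  have hs2 : (0:ℝ) ≤ ((1 - b) * (1 - c) / (2 * (1 + b * c))) := div_nonneg (mul_nonneg e2b e2c) (by positivity : (0:ℝ) < 2 * (1 + b * c)).le
  have hP2 : (0:ℝ) ≤ ((1 + b) * (1 + c') / (2 * (1 + b * c'))) := div_nonneg (mul_nonneg e1b e1c') (by positivity : (0:ℝ) < 2 * (1 + b * c')).le
  have hQ2 : (0:ℝ) ≤ ((1 - b) * (1 + c') / (2 * (1 - b * c'))) := div_nonneg (mul_nonneg e2b e1c') (by positivity : (0:ℝ) < 2 * (1 - b * c')).le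
  have hR2 : (0:ℝ) ≤ ((1 + b) * (1 - c') / (2 * (1 - b * c'))) := div_nonneg (mul_nonneg e1b e2c') (by positivity : (0:ℝ) < 2 * (1 - b * c')).le
  have hS2 : (0:ℝ) ≤ ((1 - b) * (1 - c') / (2 * (1 + b * c'))) := div_nonneg (mul_nonneg e2b e2c') (by positivity : (0:ℝ) < 2 * (1 + b * c')).le
  have hAa : (0:ℝ) ≤ ((1 + b * c) * (c + c') / (2 * c * (1 + b * c'))) := div_nonneg (mul_nonneg h1.le ecp) hd3.le
  have hBa : (0:ℝ) ≤ ((1 - b * c) * (c + c') / (2 * c * (1 - b * c'))) := div_nonneg (mul_nonneg h2.le ecp) hd4.le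
  have hGa : (0:ℝ) ≤ ((1 + b * c) * (c - c') / (2 * c * (1 - b * c'))) := div_nonneg (mul_nonneg h1.le ecm) hd4.le
  have hDa : (0:ℝ) ≤ ((1 - b * c) * (c - c') / (2 * c * (1 + b * c'))) := div_nonneg (mul_nonneg h2.le ecm) hd3.le
  have sqp2 : Real.sqrt ((1 + b) * (1 + c) / (2 * (1 + b * c))) * Real.sqrt ((1 + b) * (1 + c) / (2 * (1 + b * c))) = ((1 + b) * (1 + c) / (2 * (1 + b * c))) := Real.mul_self_sqrt hp2
  have sqq2 : Real.sqrt ((1 - b) * (1 + c) / (2 * (1 - b * c))) * Real.sqrt ((1 - b) * (1 + c) / (2 * (1 - b * c))) = ((1 - b) * (1 + c) / (2 * (1 - b * c))) := Real.mul_self_sqrt hq2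
  have sqr2 : Real.sqrt ((1 + b) * (1 - c) / (2 * (1 - b * c))) * Real.sqrt ((1 + b) * (1 - c) / (2 * (1 - b * c))) = ((1 + b) * (1 - c) / (2 * (1 - b * c))) := Real.mul_self_sqrt hr2
  have sqs2 : Real.sqrt ((1 - b) * (1 - c) / (2 * (1 + b * c))) * Real.sqrt ((1 - b) * (1 - c) / (2 * (1 + b * c))) = ((1 - b) * (1 - c) / (2 * (1 + b * c))) := Real.mul_self_sqrt hs2
  have sqP2 : Real.sqrt ((1 + b) * (1 + c') / (2 * (1 + b * c'))) * Real.sqrt ((1 + b) * (1 + c') / (2 * (1 + b * c'))) = ((1 + b) * (1 + c') / (2 * (1 + b * c'))) := Real.mul_self_sqrt hP2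
  have sqQ2 : Real.sqrt ((1 - b) * (1 + c') / (2 * (1 - b * c'))) * Real.sqrt ((1 - b) * (1 + c') / (2 * (1 - b * c'))) = ((1 - b) * (1 + c') / (2 * (1 - b * c'))) := Real.mul_self_sqrt hQ2
  have sqR2 : Real.sqrt ((1 + b) * (1 - c') / (2 * (1 - b * c'))) * Real.sqrt ((1 + b) * (1 - c') / (2 * (1 - b * c'))) = ((1 + b) * (1 - c') / (2 * (1 - b * c'))) := Real.mul_self_sqrt hR2
  have sqS2 : Real.sqrt ((1 - b) * (1 - c') / (2 * (1 + b * c'))) * Real.sqrt ((1 - b) * (1 - c') / (2 * (1 + b * c'))) = ((1 - b) * (1 - c') / (2 * (1 + b * c'))) := Real.mul_self_sqrt hS2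
  have sqAa : Real.sqrt ((1 + b * c) * (c + c') / (2 * c * (1 + b * c'))) * Real.sqrt ((1 + b * c) * (c + c') / (2 * c * (1 + b * c'))) = ((1 + b * c) * (c + c') / (2 * c * (1 + b * c'))) := Real.mul_self_sqrt hAa
  have sqBa : Real.sqrt ((1 - b * c) * (c + c') / (2 * c * (1 - b * c'))) * Real.sqrt ((1 - b * c) * (c + c') / (2 * c * (1 - b * c'))) = ((1 - b * c) * (c + c') / (2 * c * (1 - b * c'))) := Real.mul_self_sqrt hBa
  have sqGa : Real.sqrt ((1 + b * c) * (c - c') / (2 * c * (1 - b * c'))) * Real.sqrt ((1 + b * c) * (c - c') / (2 * c * (1 - b * c'))) = ((1 + b * c) * (c - c') / (2 * c * (1 - b * c'))) := Real.mul_self_sqrt hGa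
  have sqDa : Real.sqrt ((1 - b * c) * (c - c') / (2 * c * (1 + b * c'))) * Real.sqrt ((1 - b * c) * (c - c') / (2 * c * (1 + b * c'))) = ((1 - b * c) * (c - c') / (2 * c * (1 + b * c'))) := Real.mul_self_sqrt hDa
  have C1 : Real.sqrt ((1 + b * c) * (c + c') / (2 * c * (1 + b * c'))) * Real.sqrt ((1 + b * c) * (c + c') / (2 * c * (1 + b * c'))) + Real.sqrt ((1 - b * c) * (c - c') / (2 * c * (1 + b * c'))) * Real.sqrt ((1 - b * c) * (c - c') / (2 * c * (1 + b * c'))) = 1 := by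
    rw [sqAa, sqDa]; field_simp; ring
  have C2 : Real.sqrt ((1 - b * c) * (c + c') / (2 * c * (1 - b * c'))) * Real.sqrt ((1 - b * c) * (c + c') / (2 * c * (1 - b * c'))) + Real.sqrt ((1 + b * c) * (c - c') / (2 * c * (1 - b * c'))) * Real.sqrt ((1 + b * c) * (c - c') / (2 * c * (1 - b * c'))) = 1 := by
    rw [sqBa, sqGa]; field_simp; ring
  have E1 : Real.sqrt ((1 + b) * (1 + c') / (2 * (1 + b * c'))) * Real.sqrt ((1 + b) * (1 + c') / (2 * (1 + b * c'))) = Real.sqrt ((1 + b) * (1 + c) / (2 * (1 + b * c))) * Real.sqrt ((1 + b) * (1 + c) / (2 * (1 + b * c))) * (Real.sqrt ((1 + b * c) * (c + c') / (2 * c * (1 + b * c'))) * Real.sqrt ((1 + b * c) * (c + c') / (2 * c * (1 + b * c')))) + Real.sqrt ((1 + b) * (1 - c) / (2 * (1 - b * c))) * Real.sqrt ((1 + b) * (1 - c) / (2 * (1 - b * c))) * (Real.sqrt ((1 - b * c) * (c - c') / (2 * c * (1 + b * c'))) * Real.sqrt ((1 - b * c) * (c - c') / (2 * c * (1 + b *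 c')))) := by
    rw [sqP2, sqp2, sqAa, sqr2, sqDa]; field_simp; ring
  have E2 : Real.sqrt ((1 + b) * (1 - c') / (2 * (1 - b * c'))) * Real.sqrt ((1 + b) * (1 - c') / (2 * (1 - b * c'))) = Real.sqrt ((1 + b) * (1 + c) / (2 * (1 + b * c))) * Real.sqrt ((1 + b) * (1 + c) / (2 * (1 + b * c))) * (Real.sqrt ((1 + b * c) * (c - c') / (2 * c * (1 - b * c'))) * Real.sqrt ((1 + b * c) * (c - c') / (2 * c * (1 - b * c')))) + Real.sqrt ((1 + b) * (1 - c) / (2 * (1 - b * c))) * Real.sqrt ((1 + b) * (1 - c) / (2 * (1 - b * c))) * (Real.sqrt ((1 - b * c) * (c + c') / (2 * c * (1 - b * c'))) * Real.sqrt ((1 - b * c) * (c + c') / (2 * c * (1 - b * c')))) := by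
    rw [sqR2, sqp2, sqGa, sqr2, sqBa]; field_simp; ring
  have E3 : Real.sqrt ((1 - b) * (1 + c') / (2 * (1 - b * c'))) * Real.sqrt ((1 - b) * (1 + c') / (2 * (1 - b * c'))) = Real.sqrt ((1 - b) * (1 + c) / (2 * (1 - b * c))) * Real.sqrt ((1 - b) * (1 + c) / (2 * (1 - b * c))) * (Real.sqrt ((1 - b * c) * (c + c') / (2 * c * (1 - b * c'))) * Real.sqrt ((1 - b * c) * (c + c') / (2 * c * (1 - b * c')))) + Real.sqrt ((1 - b) * (1 - c) / (2 * (1 + b * c))) * Real.sqrt ((1 - b) * (1 - c) / (2 * (1 + b * c))) * (Real.sqrt ((1 + b * c) * (c - c') / (2 * c * (1 - b * c'))) * Real.sqrt ((1 + b * c) * (c - c') / (2 * c * (1 - b * c')))) := by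
    rw [sqQ2, sqq2, sqBa, sqs2, sqGa]; field_simp; ring
  have E4 : Real.sqrt ((1 - b) * (1 - c') / (2 * (1 + b * c'))) * Real.sqrt ((1 - b) * (1 - c') / (2 * (1 + b * c'))) = Real.sqrt ((1 - b) * (1 + c) / (2 * (1 - b * c))) * Real.sqrt ((1 - b) * (1 + c) / (2 * (1 - b * c))) * (Real.sqrt ((1 - b * c) * (c - c') / (2 * c * (1 + b * c'))) * Real.sqrt ((1 - b * c) * (c - c') / (2 * c * (1 + b * c')))) + Real.sqrt ((1 - b) * (1 - c) / (2 * (1 + b * c))) * Real.sqrt ((1 - b) * (1 - c) / (2 * (1 + b * c))) * (Real.sqrt ((1 + b * c) * (c + c') / (2 * c * (1 + b * c'))) * Real.sqrt ((1 + b * c) * (c + c') / (2 * c * (1 + b * c')))) := by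
    rw [sqS2, sqq2, sqDa, sqs2, sqAa]; field_simp; ring
  have he0 : (0:ℝ) ≤ ((1 - b ^ 2) * (1 - c ^ 2) * (c ^ 2 - c' ^ 2) / (16 * c ^ 2 * ((1 + b * c') * (1 - b * c')))) :=
    div_nonneg (mul_nonneg (mul_nonneg hb2 hcsq) hcc2) (by positivity)
  have E5 : Real.sqrt ((1 + b) * (1 + c') / (2 * (1 + b * c'))) * Real.sqrt ((1 - b) * (1 + c') / (2 * (1 - b * c'))) = Real.sqrt ((1 + b) * (1 + c) / (2 * (1 + b * c))) * Real.sqrt ((1 - b) * (1 + c) / (2 * (1 - b * c))) * (Real.sqrt ((1 + b * c) * (c + c') / (2 * c * (1 + b * c'))) * Real.sqrt ((1 - b * c) * (c + c') / (2 * c * (1 - b * c')))) + Real.sqrt ((1 + b) * (1 - c) / (2 * (1 - b * c))) * Real.sqrt ((1 - b) * (1 - c) / (2 * (1 + b * c))) * (Real.sqrt ((1 + b * c) * (c - c') / (2 * c * (1 - b * c'))) * Real.sqrt ((1 - b * c) * (c - c') / (2 * c * (1 + b * c')))) := by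
    have hu : (0:ℝ) ≤ ((1 + b) * (1 + c) / (2 * (1 + b * c))) * ((1 - b) * (1 + c) / (2 * (1 - b * c))) * (((1 + b * c) * (c + c') / (2 * c * (1 + b * c'))) * ((1 - b * c) * (c + c') / (2 * c * (1 - b * c')))) := mul_nonneg (mul_nonneg hp2 hq2) (mul_nonneg hAa hBa)
    have hv : (0:ℝ) ≤ ((1 + b) * (1 - c) / (2 * (1 - b * c))) * ((1 - b) * (1 - c) / (2 * (1 + b * c))) * (((1 + b * c) * (c - c') / (2 * c * (1 - b * c'))) * ((1 - b * c) * (c - c') / (2 * c * (1 + b * c')))) := mul_nonneg (mul_nonneg hr2 hs2) (mul_nonneg hGa hDa)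
    have huv : (((1 + b) * (1 + c) / (2 * (1 + b * c))) * ((1 - b) * (1 + c) / (2 * (1 - b * c))) * (((1 + b * c) * (c + c') / (2 * c * (1 + b * c'))) * ((1 - b * c) * (c + c') / (2 * c * (1 - b * c'))))) * (((1 + b) * (1 - c) / (2 * (1 - b * c))) * ((1 - b) * (1 - c) / (2 * (1 + b * c))) * (((1 + b * c) * (c - c') / (2 * c * (1 - b * c'))) * ((1 - b * c) * (c - c') / (2 * c * (1 + b * c'))))) = ((1 - b ^ 2) * (1 - c ^ 2) * (c ^ 2 - c' ^ 2) / (16 * c ^ 2 * ((1 + b * c') * (1 - b * c')))) ^ 2 := by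
      field_simp
      ring
    have hsum : ((1 + b) * (1 + c) / (2 * (1 + b * c))) * ((1 - b) * (1 + c) / (2 * (1 - b * c))) * (((1 + b * c) * (c + c') / (2 * c * (1 + b * c'))) * ((1 - b * c) * (c + c') / (2 * c * (1 - b * c')))) + ((1 + b) * (1 - c) / (2 * (1 - b * c))) * ((1 - b) * (1 - c) / (2 * (1 + b * c))) * (((1 + b * c) * (c - c') / (2 * c * (1 - b * c'))) * ((1 - b * c) * (c - c') / (2 * c * (1 + b * c')))) + 2 * ((1 - b ^ 2) * (1 - c ^ 2) * (c ^ 2 - c' ^ 2) / (16 * c ^ 2 * ((1 + b * c') * (1 - b * c')))) = ((1 + b) * (1 + c') / (2 * (1 + b * c'))) * ((1 - b) * (1 + c') / (2 * (1 - b * c'))) := by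
      field_simp
      ring
    rw [← Real.sqrt_mul hp2 ((1 - b) * (1 + c) / (2 * (1 - b * c))), ← Real.sqrt_mul hAa ((1 - b * c) * (c + c') / (2 * c * (1 - b * c'))),
      ← Real.sqrt_mul (mul_nonneg hp2 hq2),
      ← Real.sqrt_mul hr2 ((1 - b) * (1 - c) / (2 * (1 + b * c))), ← Real.sqrt_mul hGa ((1 - b * c) * (c - c') / (2 * c * (1 + b * c'))),
      ← Real.sqrt_mul (mul_nonneg hr2 hs2),
      ← Real.sqrt_mul hP2 ((1 - b) * (1 + c') / (2 * (1 - b * c')))]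
    exact (sqrt_helper hu hv he0 huv hsum).symm
  have E6 : Real.sqrt ((1 + b) * (1 - c') / (2 * (1 - b * c'))) * Real.sqrt ((1 - b) * (1 - c') / (2 * (1 + b * c'))) = Real.sqrt ((1 + b) * (1 + c) / (2 * (1 + b * c))) * Real.sqrt ((1 - b) * (1 + c) / (2 * (1 - b * c))) * (Real.sqrt ((1 + b * c) * (c - c') / (2 * c * (1 - b * c'))) * Real.sqrt ((1 - b * c) * (c - c') / (2 * c * (1 + b * c')))) + Real.sqrt ((1 + b) * (1 - c) / (2 * (1 - b * c))) * Real.sqrt ((1 - b) * (1 - c) / (2 * (1 + b * c))) * (Real.sqrt ((1 + b * c) * (c + c') / (2 * c * (1 + b * c'))) * Real.sqrt ((1 - b * c) * (c + c') / (2 * c * (1 - b * c')))) := by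
    have hu : (0:ℝ) ≤ ((1 + b) * (1 + c) / (2 * (1 + b * c))) * ((1 - b) * (1 + c) / (2 * (1 - b * c))) * (((1 + b * c) * (c - c') / (2 * c * (1 - b * c'))) * ((1 - b * c) * (c - c') / (2 * c * (1 + b * c')))) := mul_nonneg (mul_nonneg hp2 hq2) (mul_nonneg hGa hDa)
    have hv : (0:ℝ) ≤ ((1 + b) * (1 - c) / (2 * (1 - b * c))) * ((1 - b) * (1 - c) / (2 * (1 + b * c))) * (((1 + b * c) * (c + c') / (2 * c * (1 + b * c'))) * ((1 - b * c) * (c + c') / (2 * c * (1 - b * c')))) := mul_nonneg (mul_nonneg hr2 hs2) (mul_nonneg hAa hBa)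
    have huv : (((1 + b) * (1 + c) / (2 * (1 + b * c))) * ((1 - b) * (1 + c) / (2 * (1 - b * c))) * (((1 + b * c) * (c - c') / (2 * c * (1 - b * c'))) * ((1 - b * c) * (c - c') / (2 * c * (1 + b * c'))))) * (((1 + b) * (1 - c) / (2 * (1 - b * c))) * ((1 - b) * (1 - c) / (2 * (1 + b * c))) * (((1 + b * c) * (c + c') / (2 * c * (1 + b * c'))) * ((1 - b * c) * (c + c') / (2 * c * (1 - b * c'))))) = ((1 - b ^ 2) * (1 - c ^ 2) * (c ^ 2 - c' ^ 2) / (16 * c ^ 2 * ((1 + b * c') * (1 - b * c')))) ^ 2 := by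
      field_simp
      ring
    have hsum : ((1 + b) * (1 + c) / (2 * (1 + b * c))) * ((1 - b) * (1 + c) / (2 * (1 - b * c))) * (((1 + b * c) * (c - c') / (2 * c * (1 - b * c'))) * ((1 - b * c) * (c - c') / (2 * c * (1 + b * c')))) + ((1 + b) * (1 - c) / (2 * (1 - b * c))) * ((1 - b) * (1 - c) / (2 * (1 + b * c))) * (((1 + b * c) * (c + c') / (2 * c * (1 + b * c'))) * ((1 - b * c) * (c + c') / (2 * c * (1 - b * c')))) + 2 * ((1 - b ^ 2) * (1 - c ^ 2) * (c ^ 2 - c' ^ 2) / (16 * c ^ 2 * ((1 + b * c') * (1 - b * c')))) = ((1 + b) * (1 - c') / (2 * (1 - b * c'))) * ((1 - b) * (1 - c') / (2 * (1 + b * c'))) := by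
      field_simp
      ring
    rw [← Real.sqrt_mul hp2 ((1 - b) * (1 + c) / (2 * (1 - b * c))), ← Real.sqrt_mul hGa ((1 - b * c) * (c - c') / (2 * c * (1 + b * c'))),
      ← Real.sqrt_mul (mul_nonneg hp2 hq2),
      ← Real.sqrt_mul hr2 ((1 - b) * (1 - c) / (2 * (1 + b * c))), ← Real.sqrt_mul hAa ((1 - b * c) * (c + c') / (2 * c * (1 - b * c'))),
      ← Real.sqrt_mul (mul_nonneg hr2 hs2),
      ← Real.sqrt_mul hR2 ((1 - b) * (1 - c') / (2 * (1 + b * c')))]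
    exact (sqrt_helper hu hv he0 huv hsum).symm
  have C1c := congrArg (Complex.ofReal) C1
  push_cast at C1c
  have C2c := congrArg (Complex.ofReal) C2
  push_cast at C2c
  have E1c := congrArg (Complex.ofReal) E1
  push_cast at E1c
  have E2c := congrArg (Complex.ofReal) E2
  push_cast at E2c
  have E3c := congrArg (Complex.ofReal) E3
  push_cast at E3c
  have E4c := congrArg (Complex.ofReal) E4
  push_cast at E4c
  have E5c := congrArg (Complex.ofReal) E5
  push_cast at E5c
  have E6c := congrArg (Complex.ofReal) E6
  push_cast at E6c
  refine ⟨!![(Real.sqrt ((1 + b * c) * (c + c') / (2 * c * (1 + b * c'))) : ℂ), 0; 0, (Real.sqrt ((1 - b * c) * (c + c') / (2 * c * (1 - b * c'))) : ℂ)],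
      !![0, (Real.sqrt ((1 + b * c) * (c - c') / (2 * c * (1 - b * c'))) : ℂ); (Real.sqrt ((1 - b * c) * (c - c') / (2 * c * (1 + b * c'))) : ℂ), 0], ?_, ?_⟩
  · ext i j
    fin_cases i <;> fin_cases j <;>
      simp [Matrix.mul_apply, Fin.sum_univ_two, Complex.conj_ofReal, Matrix.one_apply]
    all_goals first
      | linear_combination C1c
      | linear_combination C2c
  · intro X
    ext i j
    fin_cases i <;> fin_cases j <;>
      simp [extKraus, Matrix.mul_apply, Matrix.vecMul, dotProduct, Fin.sum_univ_two, Matrix.sum_apply, Complex.conj_ofReal]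
    all_goals first
      | linear_combination X 0 0 * E1c + X 1 1 * E2c
      | linear_combination X 0 1 * E5c + X 1 0 * E6c
      | linear_combination X 1 0 * E5c + X 0 1 * E6c
      | linear_combination X 1 1 * E3c + X 0 0 * E4c
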